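/- Let $x_1,\ldots,x_n$ be a basis of $\mathcal{K}^n$, and let $L_i = \langle t^{-c_{i1}}x_1,\ldots,t^{-c_{in}}x_n\rangle_{\mathcal{O}}$ for an integer matrix $[c_{ij}]$. Then $f^t_{1,\ldots,1}(L_1,\ldots,L_n) = \max_{\sigma \in S_n}\left(\sum_{i=1}^n c_{i\sigma(i)} - \operatorname{val}\det(x_1,\ldots,x_n)\right)$, i.e., the maximal $n$-fold determinantal valuation of lattices in a common apartment equals the maximal transversal sum of the exponent matrix minus the valuation of the determinant of the frame. -/

import Mathlib

noncomputable section

/-- A lattice in `K^n`, `K = F((t))`: a finitely generated `F[[t]]`-submodule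
of full rank (it spans `K^n` over `K`). -/
def IsLattice {F : Type*} [Field F] {n : ℕ}
    (L : Submodule (PowerSeries F) (Fin n → LaurentSeries F)) : Prop :=
  L.FG ∧ Submodule.span (LaurentSeries F) (L : Set (Fin n → LaurentSeries F)) = ⊤

/-- The set of values `-val (det (v 0, …, v (n-1)))` over nonzero determinants of
vectors `v m` chosen from the lattices `X m` (column `m` from lattice `X m`). -/
def detValSet {F : Type*} [Field F] {n : ℕ}
    (X : Fin n → Submodule (PowerSeries F) (Fin n → LaurentSeries F)) : Set ℤ :=
  {z | ∃ v : Fin n → Fin n → LaurentSeries F, (∀ m, v m ∈ X m) ∧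
    (Matrix.of fun p m => v m p).det ≠ 0 ∧
    z = -((Matrix.of fun p m => v m p).det).order}

/-- Column pattern for two lattices: the first `i` columns from `X`, the rest
from `Y`; `detValSet (cols2 X Y i)` computes `fᵗ_{i,n-i}(X,Y)`. -/
def cols2 {F : Type*} [Field F] {n : ℕ}
    (X Y : Submodule (PowerSeries F) (Fin n → LaurentSeries F)) (i : ℕ) :
    Fin n → Submodule (PowerSeries F) (Fin n → LaurentSeries F) :=
  fun m => if (m : ℕ) < i then X else Y

/-- Column pattern for three lattices: first `i` columns from `X`, next `j`
from `Y`, remaining from `Z`; `detValSet (cols3 X Y Z i j)` computes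
`fᵗ_{i,j,k}(X,Y,Z)` for `k = n - i - j`. -/
def cols3 {F : Type*} [Field F] {n : ℕ}
    (X Y Z : Submodule (PowerSeries F) (Fin n → LaurentSeries F)) (i j : ℕ) :
    Fin n → Submodule (PowerSeries F) (Fin n → LaurentSeries F) :=
  fun m => if (m : ℕ) < i then X else if (m : ℕ) < i + j then Y else Z

/-- The lattice spanned by `t^{-c j} • x j` for a frame `x`. -/
def frameLattice {F : Type*} [Field F] {n : ℕ} (x : Fin n → (Fin n → LaurentSeries F))
    (c : Fin n → ℤ) : Submodule (PowerSeries F) (Fin n → LaurentSeries F) :=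
  Submodule.span (PowerSeries F)
    (Set.range fun j => (HahnSeries.single (-(c j)) (1 : F) : LaurentSeries F) • x j)

section Aux

variable {F : Type*} [Field F]

lemma aux_ofPS_order (a : PowerSeries F) (h : HahnSeries.ofPowerSeries ℤ F a ≠ 0) :
    0 ≤ (HahnSeries.ofPowerSeries ℤ F a).order := by
  by_contra hlt
  push_neg at hlt
  apply (HahnSeries.coeff_order_eq_zero.not.mpr h)
  rw [HahnSeries.ofPowerSeries_apply, HahnSeries.embDomain_notin_range]
  rintro ⟨m, hm⟩
  have : ((m : ℤ)) = (HahnSeries.ofPowerSeries ℤ F a).order := hm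
  omega

lemma aux_order_sum {ι : Type*} (s : Finset ι) (f : ι → LaurentSeries F) (b : ℤ)
    (h : ∀ i ∈ s, f i ≠ 0 → b ≤ (f i).order) (hs : (∑ i ∈ s, f i) ≠ 0) :
    b ≤ (∑ i ∈ s, f i).order := by
  induction s using Finset.cons_induction with
  | empty => simp at hs
  | cons a s ha ih =>
    rw [Finset.sum_cons] at hs ⊢
    by_cases h1 : f a = 0
    · rw [h1, zero_add] at hs ⊢
      exact ih (fun i hi => h i (Finset.mem_cons_of_mem hi)) hs
    by_cases h2 : (∑ i ∈ s, f i) = 0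
    · rw [h2, add_zero]
      exact h a (Finset.mem_cons_self a s) h1
    refine le_trans ?_ (HahnSeries.min_order_le_order_add hs)
    exact le_min (h a (Finset.mem_cons_self a s) h1)
      (ih (fun i hi => h i (Finset.mem_cons_of_mem hi)) h2)

lemma aux_order_prod {ι : Type*} (s : Finset ι) (f : ι → LaurentSeries F)
    (h : ∀ i ∈ s, f i ≠ 0) :
    (∏ i ∈ s, f i).order = ∑ i ∈ s, (f i).order := by
  induction s using Finset.cons_induction with
  | empty => simp
  | cons a s ha ih =>
    rw [Finset.prod_cons, Finset.sum_cons,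
      HahnSeries.order_mul (h a (Finset.mem_cons_self a s))
        (Finset.prod_ne_zero_iff.2 fun i hi => h i (Finset.mem_cons_of_mem hi)),
      ih (fun i hi => h i (Finset.mem_cons_of_mem hi))]

lemma aux_prod_single {ι : Type*} (s : Finset ι) (e : ι → ℤ) :
    (∏ i ∈ s, (HahnSeries.single (e i) (1 : F) : LaurentSeries F)) =
      HahnSeries.single (∑ i ∈ s, e i) 1 := by
  induction s using Finset.cons_induction with
  | empty => simp [HahnSeries.single_zero_one]
  | cons a s ha ih =>
    rw [Finset.prod_cons, Finset.sum_cons, ih, HahnSeries.single_mul_single, mul_one]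

end Aux

/-- For lattices `L i = ⟨t^{-c i 0} x 0, …, t^{-c i (n-1)} x (n-1)⟩` in a common
apartment, `fᵗ_{1,…,1}(L 0,…,L (n-1))` equals the maximal transversal sum of the
exponent matrix `[c i j]` minus `val (det (x 0, …, x (n-1)))`. -/
theorem apartment_val_eq_max_transversal {F : Type*} [Field F] {n : ℕ}
    (x : Fin n → (Fin n → LaurentSeries F))
    (hx_ind : LinearIndependent (LaurentSeries F) x)
    (hx_span : Submodule.span (LaurentSeries F) (Set.range x) = ⊤)
    (c : Fin n → Fin n → ℤ)
    (L : Fin n → Submodule (PowerSeries F) (Fin n → LaurentSeries F))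
    (hL : ∀ i, L i = frameLattice x (c i)) :
    IsGreatest (detValSet L)
      (Finset.univ.sup' Finset.univ_nonempty
        (fun σ : Equiv.Perm (Fin n) => ∑ i, c i (σ i)) -
        ((Matrix.of fun p i => x i p).det).order) := by
  classical
  set X : Matrix (Fin n) (Fin n) (LaurentSeries F) := Matrix.of fun p i => x i p with hXdef
  set M : ℤ := Finset.univ.sup' Finset.univ_nonempty
    (fun σ : Equiv.Perm (Fin n) => ∑ i, c i (σ i)) with hMdef
  have hXdet : X.det ≠ 0 := by
    have hU : IsUnit X := by
      rw [← Matrix.linearIndependent_cols_iff_isUnit]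
      exact hx_ind
    exact ((Matrix.isUnit_iff_isUnit_det X).mp hU).ne_zero
  constructor
  · -- membership
    obtain ⟨σ₀, -, hσ₀⟩ := Finset.exists_mem_eq_sup' (Finset.univ_nonempty)
      (fun σ : Equiv.Perm (Fin n) => ∑ i, c i (σ i))
    set v : Fin n → Fin n → LaurentSeries F :=
      fun m => (HahnSeries.single (-(c m (σ₀ m))) (1 : F) : LaurentSeries F) • x (σ₀ m) with hvdef
    have hdet : (Matrix.of fun p m => v m p).det =
        HahnSeries.single (∑ m, -(c m (σ₀ m))) (1 : F) *
          ((Equiv.Perm.sign σ₀ : ℤ) * X.det) := by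
      have h1 : (Matrix.of fun p m => v m p) =
          Matrix.of fun p m => (fun m => (HahnSeries.single (-(c m (σ₀ m))) (1 : F) :
            LaurentSeries F)) m * (X.submatrix id σ₀) p m := rfl
      rw [h1, Matrix.det_mul_row, aux_prod_single, Matrix.det_permute']
    have hsign : (((Equiv.Perm.sign σ₀ : ℤ) : LaurentSeries F)) ≠ 0 := by
      rcases Int.units_eq_one_or (Equiv.Perm.sign σ₀) with h | h <;> simp [h]
    have hne : (Matrix.of fun p m => v m p).det ≠ 0 := by
      rw [hdet]
      exact mul_ne_zero (HahnSeries.single_ne_zero one_ne_zero) (mul_ne_zero hsign hXdet)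
    refine ⟨v, ?_, hne, ?_⟩
    · intro m
      rw [hL m]
      exact Submodule.subset_span ⟨σ₀ m, rfl⟩
    · have horder : ((Equiv.Perm.sign σ₀ : ℤ) * X.det : LaurentSeries F).order = X.det.order := by
        rcases Int.units_eq_one_or (Equiv.Perm.sign σ₀) with h | h
        · rw [h]; simp
        · rw [h]
          have h5 : ((((-1 : ℤˣ) : ℤ)) : LaurentSeries F) * X.det = -X.det := by
            push_cast; ring
          rw [h5, HahnSeries.order_neg]
      rw [hdet, HahnSeries.order_mul (HahnSeries.single_ne_zero one_ne_zero)
        (mul_ne_zero hsign hXdet), HahnSeries.order_single one_ne_zero, horder]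
      have hs : ∑ m, -(c m (σ₀ m)) = -(∑ m, c m (σ₀ m)) := by
        rw [Finset.sum_neg_distrib]
      rw [hs, ← hσ₀]
      ring
  · -- upper bound
    rintro z ⟨v, hv, hvdet, rfl⟩
    have key : ∀ m, ∃ a : Fin n → PowerSeries F,
        ∑ j, a j • ((HahnSeries.single (-(c m j)) (1 : F) : LaurentSeries F) • x j) = v m := by
      intro m
      have hm := hv m
      rw [hL m] at hm
      exact (Submodule.mem_span_range_iff_exists_fun (PowerSeries F)).mp hm
    choose a ha using key
    set B : Matrix (Fin n) (Fin n) (LaurentSeries F) :=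
      Matrix.of fun j m => (HahnSeries.ofPowerSeries ℤ F (a m j)) *
        (HahnSeries.single (-(c m j)) (1 : F) : LaurentSeries F) with hBdef
    have hVXB : (Matrix.of fun p m => v m p) = X * B := by
      refine Matrix.ext fun p m => ?_
      rw [Matrix.mul_apply]
      show v m p = _
      rw [← ha m, Finset.sum_apply]
      refine Finset.sum_congr rfl fun j _ => ?_
      simp only [Pi.smul_apply, smul_eq_mul, Algebra.smul_def, LaurentSeries.coe_algebraMap,
        Matrix.of_apply, hBdef, hXdef, Pi.mul_apply, Pi.algebraMap_apply, Algebra.algebraMap_self,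
        RingHom.id_apply]
      ring
    have hdetV : (Matrix.of fun p m => v m p).det = X.det * B.det := by
      rw [hVXB, Matrix.det_mul]
    have hBdet : B.det ≠ 0 := by
      intro h0
      exact hvdet (by rw [hdetV, h0, mul_zero])
    have hBorder : -M ≤ B.det.order := by
      have hBne : (∑ σ : Equiv.Perm (Fin n),
          Equiv.Perm.sign σ • ∏ i, B (σ i) i) ≠ 0 := by
        rw [← Matrix.det_apply]; exact hBdet
      rw [Matrix.det_apply]
      refine aux_order_sum _ _ _ ?_ hBne
      intro σ _ hσ
      set P : LaurentSeries F := ∏ i, B (σ i) i with hPdef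
      have hP : P ≠ 0 := by
        intro h0
        apply hσ
        have hP0 : P = 0 := h0
        rw [hP0]
        simp [Units.smul_def]
      have hfac : ∀ i ∈ Finset.univ, B (σ i) i ≠ 0 :=
        Finset.prod_ne_zero_iff.mp hP
      have hfacord : ∀ i ∈ (Finset.univ : Finset (Fin n)),
          -(c i (σ i)) ≤ (B (σ i) i).order := by
        intro i _
        have hne := hfac i (Finset.mem_univ i)
        have h1 : HahnSeries.ofPowerSeries ℤ F (a i (σ i)) ≠ 0 :=
          left_ne_zero_of_mul hne
        show -(c i (σ i)) ≤ ((HahnSeries.ofPowerSeries ℤ F (a i (σ i))) *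
          (HahnSeries.single (-(c i (σ i))) (1 : F) : LaurentSeries F)).order
        rw [HahnSeries.order_mul h1 (HahnSeries.single_ne_zero one_ne_zero),
          HahnSeries.order_single one_ne_zero]
        have := aux_ofPS_order (a i (σ i)) h1
        omega
      have hPord : -M ≤ P.order := by
        rw [hPdef, aux_order_prod _ _ hfac]
        have h2 : ∑ i, -(c i (σ i)) ≤ ∑ i, (B (σ i) i).order :=
          Finset.sum_le_sum hfacord
        have h3 : ∑ i, c i (σ i) ≤ M :=
          Finset.le_sup' (fun σ : Equiv.Perm (Fin n) => ∑ i, c i (σ i)) (Finset.mem_univ σ)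
        have h4 : ∑ i, -(c i (σ i)) = -(∑ i, c i (σ i)) := by
          rw [Finset.sum_neg_distrib]
        omega
      rcases Int.units_eq_one_or (Equiv.Perm.sign σ) with h | h
      · rw [h]
        simpa [Units.smul_def] using hPord
      · rw [h]
        have h6 : (-1 : ℤˣ) • P = -P := by
          simp [Units.smul_def]
        rw [h6, HahnSeries.order_neg]
        exact hPord
    have hord : (Matrix.of fun p m => v m p).det.order = X.det.order + B.det.order := by
      rw [hdetV, HahnSeries.order_mul hXdet hBdet]
    rw [hord]
    omega

end
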